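/- arXiv:1402.4956 — 4 statements merged into one kernel-verified Lean document; each statement's English description precedes it below -/
import Mathlib

section
/- (Proposition 1, σ-derivative, corrected form.) For every y ∈ ℝ the map σ ↦ p^{θ,σ,λ}(Δ,x,y) is differentiable on (0,∞), and for (law of X)-almost every y one has ∂_σ p^{θ,σ,λ}(Δ,x,y) / p^{θ,σ,λ}(Δ,x,y) = (1/(σΔ)) · E[W² | X = y] − 1/σ, where E[W² | X = y] is the conditional expectation of W² given X, evaluated at y via a regular conditional distribution. (The published statement writes (1/Δ)E[W²|X=y] − 1/σ; the factor 1/(σΔ) given here is the one consistent with a direct computation and with the rest of the paper.) -/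
open MeasureTheory ProbabilityTheory Real Filter
open scoped NNReal ENNReal

/-- The weight `w_m^{ϑ,ς,ϰ}(Δ,x,y)`: Poisson weight times Gaussian kernel. -/
noncomputable def wgt (ϑ ς ϰ Δ x : ℝ) (m : ℕ) (y : ℝ) : ℝ :=
  Real.exp (-(ϰ * Δ)) * ((ϰ * Δ) ^ m / (Nat.factorial m : ℝ)) *
    (Real.sqrt (2 * Real.pi * ς ^ 2 * Δ))⁻¹ *
    Real.exp (-(y - x - (m : ℝ) - (ϑ - ϰ) * Δ) ^ 2 / (2 * ς ^ 2 * Δ))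

/-- The transition density `p^{ϑ,ς,ϰ}(Δ,x,y)`. -/
noncomputable def pdens (ϑ ς ϰ Δ x y : ℝ) : ℝ := ∑' m : ℕ, wgt ϑ ς ϰ Δ x m y

namespace SS

noncomputable def C (lam Δ : ℝ) (m : ℕ) : ℝ :=
  Real.exp (-(lam * Δ)) * ((lam * Δ) ^ m / (Nat.factorial m : ℝ))

def a (θ lam Δ x : ℝ) (m : ℕ) (y : ℝ) : ℝ := y - x - (m : ℝ) - (θ - lam) * Δ

lemma wgt_eq (θ ς lam Δ x : ℝ) (m : ℕ) (y : ℝ) :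
    wgt θ ς lam Δ x m y = C lam Δ m * (Real.sqrt (2 * Real.pi * ς ^ 2 * Δ))⁻¹ *
      Real.exp (-(a θ lam Δ x m y) ^ 2 / (2 * ς ^ 2 * Δ)) := rfl

lemma C_pos {lam Δ : ℝ} (hlam : 0 < lam) (hΔ : 0 < Δ) (m : ℕ) : 0 < C lam Δ m := by
  have : (0:ℝ) < (lam * Δ) ^ m := pow_pos (mul_pos hlam hΔ) m
  have h2 : (0:ℝ) < (Nat.factorial m : ℝ) := by exact_mod_cast Nat.factorial_pos m
  unfold C; positivity

lemma summable_C (lam Δ : ℝ) : Summable (C lam Δ) :=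
  (Real.summable_pow_div_factorial (lam * Δ)).mul_left _

lemma sqrt_fact {ς Δ : ℝ} (hς : 0 < ς) (hΔ : 0 < Δ) :
    Real.sqrt (2 * Real.pi * ς ^ 2 * Δ) = ς * Real.sqrt (2 * Real.pi * Δ) := by
  rw [show 2 * Real.pi * ς ^ 2 * Δ = ς ^ 2 * (2 * Real.pi * Δ) by ring,
    Real.sqrt_mul (sq_nonneg ς), Real.sqrt_sq hς.le]

lemma sqrt2piD_pos {Δ : ℝ} (hΔ : 0 < Δ) : 0 < Real.sqrt (2 * Real.pi * Δ) :=
  Real.sqrt_pos.mpr (by positivity)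

lemma wgt_pos {θ ς lam Δ x : ℝ} (hς : 0 < ς) (hlam : 0 < lam) (hΔ : 0 < Δ) (m : ℕ) (y : ℝ) :
    0 < wgt θ ς lam Δ x m y := by
  rw [wgt_eq]
  have h1 := C_pos hlam hΔ (m := m)
  have h2 : 0 < Real.sqrt (2 * Real.pi * ς ^ 2 * Δ) := by
    rw [sqrt_fact hς hΔ]; exact mul_pos hς (sqrt2piD_pos hΔ)
  positivity

lemma exp_bound {t : ℝ} (ht : 0 ≤ t) : t * Real.exp (-t) ≤ 1 := by
  rw [Real.exp_neg, ← div_eq_mul_inv, div_le_one (Real.exp_pos t)]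
  linarith [Real.add_one_le_exp t]

lemma wgt_le {θ ς lam Δ x : ℝ} (hς : 0 < ς) (hlam : 0 < lam) (hΔ : 0 < Δ) (m : ℕ) (y : ℝ) :
    wgt θ ς lam Δ x m y ≤ C lam Δ m * (ς * Real.sqrt (2 * Real.pi * Δ))⁻¹ := by
  rw [wgt_eq, sqrt_fact hς hΔ]
  have h1 : Real.exp (-(a θ lam Δ x m y) ^ 2 / (2 * ς ^ 2 * Δ)) ≤ 1 := by
    apply Real.exp_le_one_iff.mpr
    apply div_nonpos_of_nonpos_of_nonneg (neg_nonpos.mpr (sq_nonneg _)) (by positivity)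
  have h2 : 0 ≤ C lam Δ m * (ς * Real.sqrt (2 * Real.pi * Δ))⁻¹ := by
    have := sqrt2piD_pos hΔ
    have := C_pos hlam hΔ (m := m)
    positivity
  calc C lam Δ m * (ς * Real.sqrt (2 * Real.pi * Δ))⁻¹ *
        Real.exp (-(a θ lam Δ x m y) ^ 2 / (2 * ς ^ 2 * Δ))
      ≤ C lam Δ m * (ς * Real.sqrt (2 * Real.pi * Δ))⁻¹ * 1 := by
        exact mul_le_mul_of_nonneg_left h1 h2
    _ = _ := mul_one _

/-- bound for the second-moment weighted series -/
lemma sq_wgt_le {θ ς lam Δ x : ℝ} (hς : 0 < ς) (hlam : 0 < lam) (hΔ : 0 < Δ) (m : ℕ) (y : ℝ) :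
    (a θ lam Δ x m y) ^ 2 / ς ^ 2 * wgt θ ς lam Δ x m y
      ≤ C lam Δ m * (ς * Real.sqrt (2 * Real.pi * Δ))⁻¹ * (2 * Δ) := by
  rw [wgt_eq, sqrt_fact hς hΔ]
  set A := (a θ lam Δ x m y) ^ 2 with hA
  set K := C lam Δ m * (ς * Real.sqrt (2 * Real.pi * Δ))⁻¹ with hK
  have hKpos : 0 < K := by
    have := sqrt2piD_pos hΔ
    have := C_pos hlam hΔ (m := m)
    positivity
  have key : A / ς ^ 2 * Real.exp (-A / (2 * ς ^ 2 * Δ)) ≤ 2 * Δ := by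
    have ht : 0 ≤ A / (2 * ς ^ 2 * Δ) := by positivity
    have h := exp_bound ht
    have hformula : A / ς ^ 2 * Real.exp (-A / (2 * ς ^ 2 * Δ))
        = 2 * Δ * (A / (2 * ς ^ 2 * Δ) * Real.exp (-(A / (2 * ς ^ 2 * Δ)))) := by
      rw [neg_div]
      field_simp
    rw [hformula]
    calc 2 * Δ * (A / (2 * ς ^ 2 * Δ) * Real.exp (-(A / (2 * ς ^ 2 * Δ))))
        ≤ 2 * Δ * 1 := by
          apply mul_le_mul_of_nonneg_left h (by positivity)
      _ = 2 * Δ := mul_one _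
  calc A / ς ^ 2 * (K * Real.exp (-A / (2 * ς ^ 2 * Δ)))
      = K * (A / ς ^ 2 * Real.exp (-A / (2 * ς ^ 2 * Δ))) := by ring
    _ ≤ K * (2 * Δ) := mul_le_mul_of_nonneg_left key hKpos.le
    _ = _ := rfl

lemma summable_wgt {θ ς lam Δ x : ℝ} (hς : 0 < ς) (hlam : 0 < lam) (hΔ : 0 < Δ) (y : ℝ) :
    Summable (fun m => wgt θ ς lam Δ x m y) := by
  apply Summable.of_nonneg_of_le (fun m => (wgt_pos hς hlam hΔ m y).le)
    (fun m => wgt_le hς hlam hΔ m y)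
  exact (summable_C lam Δ).mul_right _

lemma summable_sq_wgt {θ ς lam Δ x : ℝ} (hς : 0 < ς) (hlam : 0 < lam) (hΔ : 0 < Δ) (y : ℝ) :
    Summable (fun m => (a θ lam Δ x m y) ^ 2 / ς ^ 2 * wgt θ ς lam Δ x m y) := by
  apply Summable.of_nonneg_of_le
    (fun m => mul_nonneg (by positivity) (wgt_pos hς hlam hΔ m y).le)
    (fun m => sq_wgt_le hς hlam hΔ m y)
  exact ((summable_C lam Δ).mul_right _).mul_right _

lemma pdens_pos {θ σ lam Δ x : ℝ} (hσ : 0 < σ) (hlam : 0 < lam) (hΔ : 0 < Δ) (y : ℝ) :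
    0 < pdens θ σ lam Δ x y :=
  (wgt_pos hσ hlam hΔ 0 y).trans_le
    (Summable.le_tsum (summable_wgt hσ hlam hΔ y) 0 (fun m _ => (wgt_pos hσ hlam hΔ m y).le))

/-- the numerator series -/
noncomputable def num (θ σ lam Δ x y : ℝ) : ℝ :=
  ∑' m : ℕ, (a θ lam Δ x m y) ^ 2 / σ ^ 2 * wgt θ σ lam Δ x m y

noncomputable def gfun (θ σ lam Δ x y : ℝ) : ℝ :=
  num θ σ lam Δ x y / pdens θ σ lam Δ x y

lemma num_nonneg {θ σ lam Δ x : ℝ} (hσ : 0 < σ) (hlam : 0 < lam) (hΔ : 0 < Δ) (y : ℝ) :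
    0 ≤ num θ σ lam Δ x y :=
  tsum_nonneg (fun m => mul_nonneg (by positivity) (wgt_pos hσ hlam hΔ m y).le)

lemma gfun_nonneg {θ σ lam Δ x : ℝ} (hσ : 0 < σ) (hlam : 0 < lam) (hΔ : 0 < Δ) (y : ℝ) :
    0 ≤ gfun θ σ lam Δ x y :=
  div_nonneg (num_nonneg hσ hlam hΔ y) (pdens_pos hσ hlam hΔ y).le

lemma continuous_wgt_y (θ ς lam Δ x : ℝ) (m : ℕ) :
    Continuous (fun y => wgt θ ς lam Δ x m y) := by
  unfold wgt
  fun_prop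

lemma continuous_pdens_y {θ σ lam Δ x : ℝ} (hσ : 0 < σ) (hlam : 0 < lam) (hΔ : 0 < Δ) :
    Continuous (fun y => pdens θ σ lam Δ x y) := by
  apply continuous_tsum (fun m => continuous_wgt_y θ σ lam Δ x m)
    ((summable_C lam Δ).mul_right (σ * Real.sqrt (2 * Real.pi * Δ))⁻¹)
  intro m y
  rw [Real.norm_of_nonneg (wgt_pos hσ hlam hΔ m y).le]
  exact wgt_le hσ hlam hΔ m y

lemma continuous_num_y {θ σ lam Δ x : ℝ} (hσ : 0 < σ) (hlam : 0 < lam) (hΔ : 0 < Δ) :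
    Continuous (fun y => num θ σ lam Δ x y) := by
  apply continuous_tsum
    (f := fun m y => (a θ lam Δ x m y) ^ 2 / σ ^ 2 * wgt θ σ lam Δ x m y)
    (fun m => by unfold a; exact (by fun_prop : Continuous _).mul (continuous_wgt_y θ σ lam Δ x m))
    (((summable_C lam Δ).mul_right (σ * Real.sqrt (2 * Real.pi * Δ))⁻¹).mul_right (2 * Δ))
  intro m y
  rw [Real.norm_of_nonneg (mul_nonneg (by positivity) (wgt_pos hσ hlam hΔ m y).le)]
  exact sq_wgt_le hσ hlam hΔ m y

lemma continuous_gfun_y {θ σ lam Δ x : ℝ} (hσ : 0 < σ) (hlam : 0 < lam) (hΔ : 0 < Δ) :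
    Continuous (fun y => gfun θ σ lam Δ x y) :=
  (continuous_num_y hσ hlam hΔ).div (continuous_pdens_y hσ hlam hΔ)
    (fun y => (pdens_pos hσ hlam hΔ y).ne')

/-! ### Derivative in `ς` -/

/-- smooth-in-`ς` version of `wgt` (agrees with `wgt` for `ς > 0`) -/
noncomputable def wgt' (θ lam Δ x : ℝ) (m : ℕ) (y ς : ℝ) : ℝ :=
  C lam Δ m * ((Real.sqrt (2 * Real.pi * Δ))⁻¹ * ς⁻¹) *
    Real.exp (-(a θ lam Δ x m y) ^ 2 / (2 * ς ^ 2 * Δ))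

noncomputable def dwgt' (θ lam Δ x : ℝ) (m : ℕ) (y ς : ℝ) : ℝ :=
  wgt' θ lam Δ x m y ς * ((a θ lam Δ x m y) ^ 2 / (Δ * ς ^ 3) - 1 / ς)

lemma wgt'_eq_wgt {θ lam Δ x ς : ℝ} (hς : 0 < ς) (hΔ : 0 < Δ) (m : ℕ) (y : ℝ) :
    wgt' θ lam Δ x m y ς = wgt θ ς lam Δ x m y := by
  rw [wgt_eq, sqrt_fact hς hΔ, mul_inv, wgt', mul_comm ς⁻¹ (Real.sqrt (2 * Real.pi * Δ))⁻¹]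

lemma exponent_eq {Δ : ℝ} (hΔ : 0 < Δ) (A : ℝ) (t : ℝ) :
    -A / (2 * t ^ 2 * Δ) = -A / (2 * Δ) * (t ^ 2)⁻¹ := by
  by_cases ht : t = 0
  · simp [ht]
  · field_simp

lemma hasDerivAt_wgt' {θ lam Δ x ς : ℝ} (hΔ : 0 < Δ) (hς : ς ≠ 0) (m : ℕ) (y : ℝ) :
    HasDerivAt (fun t => wgt' θ lam Δ x m y t) (dwgt' θ lam Δ x m y ς) ς := by
  set A := (a θ lam Δ x m y) ^ 2 with hA
  have hrw : (fun t => wgt' θ lam Δ x m y t) = fun t =>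
      (C lam Δ m * (Real.sqrt (2 * Real.pi * Δ))⁻¹) *
        (t⁻¹ * Real.exp (-A / (2 * Δ) * (t ^ 2)⁻¹)) := by
    funext t
    rw [wgt', ← exponent_eq hΔ]
    ring
  have h1 : HasDerivAt (fun t : ℝ => (t ^ 2)⁻¹) (-(2 * ς ^ 1) / (ς ^ 2) ^ 2) ς := by
    have := (hasDerivAt_pow 2 ς).inv (pow_ne_zero 2 hς)
    simpa [Pi.inv_def] using this
  have h2 := (h1.const_mul (-A / (2 * Δ))).exp
  have h4 : HasDerivAt (fun t : ℝ => t⁻¹) (-(ς ^ 2)⁻¹) ς := hasDerivAt_inv hς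
  have h5 := h4.mul h2
  have h6 := h5.const_mul (C lam Δ m * (Real.sqrt (2 * Real.pi * Δ))⁻¹)
  rw [hrw]
  refine h6.congr_deriv ?_
  rw [dwgt', wgt', ← hA, exponent_eq hΔ]
  field_simp
  ring

lemma dwgt'_bound {θ lam Δ x δ ς : ℝ} (hlam : 0 < lam) (hΔ : 0 < Δ) (hδ : 0 < δ)
    (hδς : δ ≤ ς) (m : ℕ) (y : ℝ) :
    ‖dwgt' θ lam Δ x m y ς‖ ≤ C lam Δ m * ((Real.sqrt (2 * Real.pi * Δ))⁻¹ * (3 / δ ^ 2)) := by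
  have hςpos : 0 < ς := hδ.trans_le hδς
  set A := (a θ lam Δ x m y) ^ 2 with hA
  have hA0 : 0 ≤ A := sq_nonneg _
  set K := (Real.sqrt (2 * Real.pi * Δ))⁻¹ with hK
  have hK0 : 0 ≤ K := by rw [hK]; positivity
  have hCm : 0 ≤ C lam Δ m := (C_pos hlam hΔ m).le
  set E := Real.exp (-A / (2 * ς ^ 2 * Δ)) with hE
  have hE0 : 0 < E := Real.exp_pos _
  have hE1 : E ≤ 1 := Real.exp_le_one_iff.mpr
    (div_nonpos_of_nonpos_of_nonneg (neg_nonpos.mpr hA0) (by positivity))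
  have hE2 : A / (Δ * ς ^ 2) * E ≤ 2 := by
    have ht : (0:ℝ) ≤ A / (2 * ς ^ 2 * Δ) := by positivity
    have h := exp_bound ht
    have hform : A / (Δ * ς ^ 2) * E
        = 2 * (A / (2 * ς ^ 2 * Δ) * Real.exp (-(A / (2 * ς ^ 2 * Δ)))) := by
      rw [hE, neg_div]
      field_simp
    rw [hform]
    nlinarith
  have hw0 : 0 ≤ wgt' θ lam Δ x m y ς := by
    rw [wgt', ← hA, ← hK, ← hE]
    positivity
  have habs : |A / (Δ * ς ^ 3) - 1 / ς| ≤ A / (Δ * ς ^ 3) + 1 / ς := by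
    have h1 : (0:ℝ) ≤ A / (Δ * ς ^ 3) := by positivity
    have h2 : (0:ℝ) ≤ 1 / ς := by positivity
    rw [abs_le]
    constructor <;> linarith
  have e1 : wgt' θ lam Δ x m y ς * (A / (Δ * ς ^ 3) + 1 / ς)
      = C lam Δ m * K * ((A / (Δ * ς ^ 2) * E) * (ς ^ 2)⁻¹ + E * (ς ^ 2)⁻¹) := by
    rw [wgt', ← hA, ← hK, ← hE]
    field_simp
  have hinv : (ς ^ 2)⁻¹ ≤ (δ ^ 2)⁻¹ := by
    apply inv_anti₀ (by positivity)
    nlinarith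
  have hinv0 : (0:ℝ) ≤ (ς ^ 2)⁻¹ := by positivity
  calc ‖dwgt' θ lam Δ x m y ς‖
      = wgt' θ lam Δ x m y ς * |A / (Δ * ς ^ 3) - 1 / ς| := by
        rw [dwgt', ← hA, Real.norm_eq_abs, abs_mul, abs_of_nonneg hw0]
    _ ≤ wgt' θ lam Δ x m y ς * (A / (Δ * ς ^ 3) + 1 / ς) :=
        mul_le_mul_of_nonneg_left habs hw0
    _ = C lam Δ m * K * ((A / (Δ * ς ^ 2) * E) * (ς ^ 2)⁻¹ + E * (ς ^ 2)⁻¹) := e1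
    _ ≤ C lam Δ m * K * (2 * (δ ^ 2)⁻¹ + 1 * (δ ^ 2)⁻¹) := by
        gcongr
    _ = C lam Δ m * (K * (3 / δ ^ 2)) := by
        field_simp
        ring

lemma hasDerivAt_pdens {θ lam Δ x : ℝ} (hlam : 0 < lam) (hΔ : 0 < Δ) (y : ℝ) {s : ℝ}
    (hs : 0 < s) :
    HasDerivAt (fun ς => pdens θ ς lam Δ x y) (∑' m, dwgt' θ lam Δ x m y s) s := by
  have hhalf : 0 < s / 2 := by linarith
  have hst : s ∈ Set.Ioi (s / 2) := by simp only [Set.mem_Ioi]; linarith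
  have key : HasDerivAt (fun ς => ∑' m, wgt' θ lam Δ x m y ς)
      (∑' m, dwgt' θ lam Δ x m y s) s := by
    apply hasDerivAt_tsum_of_isPreconnected
      (u := fun m => C lam Δ m * ((Real.sqrt (2 * Real.pi * Δ))⁻¹ * (3 / (s / 2) ^ 2)))
      ((summable_C lam Δ).mul_right _) isOpen_Ioi isPreconnected_Ioi
      (fun m ς hς => hasDerivAt_wgt' hΔ (ne_of_gt (hhalf.trans hς)) m y)
      (fun m ς hς => dwgt'_bound hlam hΔ hhalf (le_of_lt hς) m y)
      hst ?_ hst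
    have : (fun m => wgt' θ lam Δ x m y s) = fun m => wgt θ s lam Δ x m y :=
      funext fun m => wgt'_eq_wgt hs hΔ m y
    rw [this]
    exact summable_wgt hs hlam hΔ y
  apply key.congr_of_eventuallyEq
  filter_upwards [Ioi_mem_nhds hs] with ς hς
  exact tsum_congr fun m => (wgt'_eq_wgt hς hΔ m y).symm

lemma deriv_pdens_eq {θ σ lam Δ x : ℝ} (hσ : 0 < σ) (hlam : 0 < lam) (hΔ : 0 < Δ) (y : ℝ) :
    deriv (fun ς => pdens θ ς lam Δ x y) σ
      = 1 / (σ * Δ) * num θ σ lam Δ x y - 1 / σ * pdens θ σ lam Δ x y := by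
  rw [(hasDerivAt_pdens hlam hΔ y hσ).deriv]
  have hterm : ∀ m : ℕ, dwgt' θ lam Δ x m y σ
      = 1 / (σ * Δ) * ((a θ lam Δ x m y) ^ 2 / σ ^ 2 * wgt θ σ lam Δ x m y)
        - 1 / σ * wgt θ σ lam Δ x m y := by
    intro m
    rw [dwgt', wgt'_eq_wgt hσ hΔ]
    field_simp
  rw [tsum_congr hterm,
    Summable.tsum_sub ((summable_sq_wgt hσ hlam hΔ y).mul_left _) ((summable_wgt hσ hlam hΔ y).mul_left _),
    tsum_mul_left, tsum_mul_left]
  rfl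

lemma score_formula {θ σ lam Δ x : ℝ} (hσ : 0 < σ) (hlam : 0 < lam) (hΔ : 0 < Δ) (y : ℝ) :
    deriv (fun ς => pdens θ ς lam Δ x y) σ / pdens θ σ lam Δ x y
      = 1 / (σ * Δ) * gfun θ σ lam Δ x y - 1 / σ := by
  rw [deriv_pdens_eq hσ hlam hΔ y, gfun]
  have hp : pdens θ σ lam Δ x y ≠ 0 := (pdens_pos hσ hlam hΔ y).ne'
  rw [sub_div, mul_div_assoc, mul_div_assoc, div_self hp, mul_one]

/-! ### The law of `X` and the master integral identity -/

lemma wgt_ofReal_eq {θ σ lam Δ x : ℝ} (hσ : 0 < σ) (hlam : 0 < lam) (hΔ : 0 < Δ)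
    (m : ℕ) (y : ℝ) :
    ENNReal.ofReal (wgt θ σ lam Δ x m y)
      = ENNReal.ofReal (Real.exp (-(lam * Δ)) * (lam * Δ) ^ m / (Nat.factorial m : ℝ))
        * gaussianPDF (x + (θ - lam) * Δ + m) (⟨σ ^ 2, sq_nonneg σ⟩ * Δ.toNNReal) y := by
  have hfac : (0:ℝ) < (Nat.factorial m : ℝ) := by exact_mod_cast Nat.factorial_pos m
  rw [gaussianPDF, ← ENNReal.ofReal_mul (by positivity)]
  congr 1
  have hv : ((⟨σ ^ 2, sq_nonneg σ⟩ * Δ.toNNReal : ℝ≥0) : ℝ) = σ ^ 2 * Δ := by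
    change ((⟨σ ^ 2, sq_nonneg σ⟩ : ℝ≥0) : ℝ) * (Δ.toNNReal : ℝ) = σ ^ 2 * Δ
    rw [Real.coe_toNNReal _ hΔ.le]
  rw [gaussianPDFReal, hv, wgt,
    show (2:ℝ) * Real.pi * (σ ^ 2 * Δ) = 2 * Real.pi * σ ^ 2 * Δ from by ring,
    show (2:ℝ) * (σ ^ 2 * Δ) = 2 * σ ^ 2 * Δ from by ring,
    show y - (x + (θ - lam) * Δ + m) = y - x - m - (θ - lam) * Δ from by ring]
  ring

lemma master {Ω : Type*} [MeasurableSpace Ω] (μ : Measure Ω) [IsProbabilityMeasure μ]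
    (Δ x θ σ lam : ℝ) (hΔ : 0 < Δ) (hσ : 0 < σ) (hlam : 0 < lam)
    (W : Ω → ℝ) (P : Ω → ℕ) (hWm : Measurable W) (hPm : Measurable P)
    (hW : μ.map W = gaussianReal 0 Δ.toNNReal)
    (hP : ∀ m : ℕ, μ (P ⁻¹' {m}) =
      ENNReal.ofReal (Real.exp (-(lam * Δ)) * (lam * Δ) ^ m / (Nat.factorial m : ℝ)))
    (hWP : IndepFun W P μ)
    (X : Ω → ℝ) (hX : X = fun ω => x + θ * Δ + σ * W ω + (P ω : ℝ) - lam * Δ)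
    (F : ℝ → ℝ → ENNReal) (hF : Measurable (Function.uncurry F)) :
    ∫⁻ ω, F (W ω) (X ω) ∂μ
      = ∫⁻ y, ∑' m : ℕ, ENNReal.ofReal (wgt θ σ lam Δ x m y)
          * F ((y - (x + (θ - lam) * Δ + m)) / σ) y := by
  set c : ℕ → ℝ := fun m => x + (θ - lam) * Δ + m with hc
  have hXc : ∀ ω, X ω = c (P ω) + σ * W ω := by
    intro ω; rw [hX]; simp only [hc]; ring
  -- the inner functions
  set G : ℕ → ℝ → ENNReal := fun m w => F w (c m + σ * w) with hG
  set H : ℕ → ℝ → ENNReal := fun m y => F ((y - c m) / σ) y with hH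
  have hGm : ∀ m, Measurable (G m) := fun m =>
    hF.comp (measurable_id.prodMk ((measurable_id.const_mul σ).const_add (c m)))
  have hHm : ∀ m, Measurable (H m) := fun m =>
    hF.comp (((measurable_id.sub_const (c m)).div_const σ).prodMk measurable_id)
  have hmeasm : ∀ m : ℕ, MeasurableSet (P ⁻¹' {m}) := fun m => hPm (measurableSet_singleton m)
  -- variance
  obtain ⟨v, hv⟩ : ∃ v : ℝ≥0, v = (⟨σ ^ 2, sq_nonneg σ⟩ * Δ.toNNReal : ℝ≥0) := ⟨_, rfl⟩
  have hvne : v ≠ 0 := by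
    rw [hv]
    refine mul_ne_zero ?_ ?_
    · intro h
      have := congrArg NNReal.toReal h
      simp only [NNReal.coe_mk, NNReal.coe_zero] at this
      change σ ^ 2 = 0 at this
      nlinarith
    · simp only [ne_eq, Real.toNNReal_eq_zero, not_le]
      exact hΔ
  -- Step 1 : partition over the values of P
  have hU : (⋃ m : ℕ, P ⁻¹' {m}) = Set.univ := by ext ω; simp
  have hdisj : Pairwise (Function.onFun Disjoint fun m : ℕ => P ⁻¹' {m}) := fun i j hij =>
    Disjoint.preimage _ (by simpa using hij)
  have step1 : ∫⁻ ω, F (W ω) (X ω) ∂μ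
      = ∑' m : ℕ, ∫⁻ ω in P ⁻¹' {m}, F (W ω) (X ω) ∂μ := by
    rw [← setLIntegral_univ, ← hU, lintegral_iUnion hmeasm hdisj]
  -- Step 2 : on each piece, rewrite the integrand and use independence
  have step2 : ∀ m : ℕ, ∫⁻ ω in P ⁻¹' {m}, F (W ω) (X ω) ∂μ
      = (∫⁻ ω, G m (W ω) ∂μ) * μ (P ⁻¹' {m}) := by
    intro m
    have h1 : ∫⁻ ω in P ⁻¹' {m}, F (W ω) (X ω) ∂μ = ∫⁻ ω in P ⁻¹' {m}, G m (W ω) ∂μ := by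
      apply setLIntegral_congr_fun (hmeasm m)
      intro ω hω
      have : P ω = m := hω
      show F (W ω) (X ω) = G m (W ω)
      rw [hXc, this]
    rw [h1]
    have h2 : ∫⁻ ω in P ⁻¹' {m}, G m (W ω) ∂μ
        = ∫⁻ ω, G m (W ω) * Set.indicator ({m} : Set ℕ)
            (fun _ => (1 : ENNReal)) (P ω) ∂μ := by
      rw [← lintegral_indicator (hmeasm m)]
      congr 1
      funext ω
      by_cases hω : P ω = m
      · simp [Set.indicator, hω]
      · simp [Set.indicator, hω]
    rw [h2]
    have hind : IndepFun (fun ω => G m (W ω))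
        (fun ω => Set.indicator ({m} : Set ℕ) (fun _ => (1 : ENNReal)) (P ω)) μ :=
      hWP.comp (hGm m) (measurable_const.indicator (measurableSet_singleton m))
    have hmul := lintegral_mul_eq_lintegral_mul_lintegral_of_indepFun
      ((hGm m).comp hWm)
      ((measurable_const.indicator (measurableSet_singleton m)).comp hPm) hind
    simp only [Pi.mul_apply, Function.comp_apply] at hmul
    rw [hmul]
    congr 1
    have : (fun ω => Set.indicator ({m} : Set ℕ) (fun _ => (1 : ENNReal)) (P ω))
        = Set.indicator (P ⁻¹' {m}) (fun _ => (1 : ENNReal)) := by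
      funext ω
      by_cases hω : P ω = m
      · simp [Set.indicator, hω]
      · simp [Set.indicator, hω]
    rw [this, lintegral_indicator (hmeasm m), setLIntegral_one]
  -- Step 3 : transfer to the Gaussian law and change variables
  have step3 : ∀ m : ℕ, ∫⁻ ω, G m (W ω) ∂μ
      = ∫⁻ y, gaussianPDF (c m) v y * H m y ∂(volume : Measure ℝ) := by
    intro m
    have h1 : ∫⁻ ω, G m (W ω) ∂μ = ∫⁻ w, G m w ∂(gaussianReal 0 Δ.toNNReal) := by
      rw [← hW, lintegral_map (hGm m) hWm]
    have h2 : ∀ w, G m w = H m (c m + σ * w) := by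
      intro w
      simp only [hG, hH]
      congr 1
      field_simp
      ring
    have h3 : ∫⁻ w, G m w ∂(gaussianReal 0 Δ.toNNReal)
        = ∫⁻ y, H m y ∂((gaussianReal 0 Δ.toNNReal).map (fun w => c m + σ * w)) := by
      rw [lintegral_map (hHm m) (show Measurable fun w : ℝ => c m + σ * w by fun_prop)]
      exact lintegral_congr h2
    have h4 : (gaussianReal 0 Δ.toNNReal).map (fun w => c m + σ * w)
        = gaussianReal (c m) v := by
      have hcomp : (fun w : ℝ => c m + σ * w) = (fun w : ℝ => w + c m) ∘ (fun w : ℝ => σ * w) := by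
        funext w
        simp [add_comm]
      rw [hcomp, ← Measure.map_map (measurable_id'.add_const (c m)) (measurable_id'.const_mul σ)]
      rw [show (fun w : ℝ => σ * w) = (σ * ·) from rfl, gaussianReal_map_const_mul]
      rw [show (fun w : ℝ => w + c m) = (· + c m) from rfl, gaussianReal_map_add_const]
      rw [hv]
      congr 1
      norm_num
    have h5 : ∫⁻ y, H m y ∂(gaussianReal (c m) v)
        = ∫⁻ y, gaussianPDF (c m) v y * H m y ∂(volume : Measure ℝ) := by
      rw [gaussianReal_of_var_ne_zero _ hvne,
        lintegral_withDensity_eq_lintegral_mul _ (measurable_gaussianPDF _ _) (hHm m)]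
      rfl
    rw [h1, h3, h4, h5]
  -- Step 4 : reassemble
  rw [step1]
  have step4 : ∀ m : ℕ, (∫⁻ ω, G m (W ω) ∂μ) * μ (P ⁻¹' {m})
      = ∫⁻ y, ENNReal.ofReal (wgt θ σ lam Δ x m y) * H m y ∂(volume : Measure ℝ) := by
    intro m
    rw [step3 m, hP m, mul_comm,
      ← lintegral_const_mul _ (f := fun y => gaussianPDF (c m) v y * H m y) ((measurable_gaussianPDF _ _).mul (hHm m))]
    congr 1
    funext y
    rw [wgt_ofReal_eq hσ hlam hΔ m y,
      show x + (θ - lam) * Δ + (m:ℝ) = c m from rfl, ← hv, mul_assoc]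
  calc ∑' m : ℕ, ∫⁻ ω in P ⁻¹' {m}, F (W ω) (X ω) ∂μ
      = ∑' m : ℕ, ∫⁻ y, ENNReal.ofReal (wgt θ σ lam Δ x m y) * H m y ∂(volume : Measure ℝ) := by
        exact tsum_congr fun m => by rw [step2 m, step4 m]
    _ = ∫⁻ y, ∑' m : ℕ, ENNReal.ofReal (wgt θ σ lam Δ x m y) * H m y ∂(volume : Measure ℝ) := by
        rw [← lintegral_tsum (f := fun m y => ENNReal.ofReal (wgt θ σ lam Δ x m y) * H m y) fun m =>
          (((continuous_wgt_y θ σ lam Δ x m).measurable.ennreal_ofReal).mul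
            (hHm m)).aemeasurable]
    _ = _ := rfl

/-- The two lintegrals against any measurable set agree. -/
lemma lint_eq {Ω : Type*} [MeasurableSpace Ω] (μ : Measure Ω) [IsProbabilityMeasure μ]
    (Δ x θ σ lam : ℝ) (hΔ : 0 < Δ) (hσ : 0 < σ) (hlam : 0 < lam)
    (W : Ω → ℝ) (P : Ω → ℕ) (hWm : Measurable W) (hPm : Measurable P)
    (hW : μ.map W = gaussianReal 0 Δ.toNNReal)
    (hP : ∀ m : ℕ, μ (P ⁻¹' {m}) =
      ENNReal.ofReal (Real.exp (-(lam * Δ)) * (lam * Δ) ^ m / (Nat.factorial m : ℝ)))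
    (hWP : IndepFun W P μ)
    (X : Ω → ℝ) (hX : X = fun ω => x + θ * Δ + σ * W ω + (P ω : ℝ) - lam * Δ)
    (B : Set ℝ) (hB : MeasurableSet B) :
    ∫⁻ ω, ENNReal.ofReal ((W ω) ^ 2) * B.indicator (fun _ => (1 : ℝ≥0∞)) (X ω) ∂μ
      = ∫⁻ ω, ENNReal.ofReal (gfun θ σ lam Δ x (X ω))
          * B.indicator (fun _ => (1 : ℝ≥0∞)) (X ω) ∂μ := by
  have hgc : Continuous (fun y => gfun θ σ lam Δ x y) := continuous_gfun_y hσ hlam hΔ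
  have h1 := master μ Δ x θ σ lam hΔ hσ hlam W P hWm hPm hW hP hWP X hX
    (fun w y => ENNReal.ofReal (w ^ 2) * B.indicator (fun _ => (1 : ℝ≥0∞)) y)
    (((measurable_fst.pow_const 2).ennreal_ofReal).mul
      ((measurable_const.indicator hB).comp measurable_snd))
  have h2 := master μ Δ x θ σ lam hΔ hσ hlam W P hWm hPm hW hP hWP X hX
    (fun _ y => ENNReal.ofReal (gfun θ σ lam Δ x y) * B.indicator (fun _ => (1 : ℝ≥0∞)) y)
    (((hgc.measurable.ennreal_ofReal).mul (measurable_const.indicator hB)).comp measurable_snd)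
  rw [h1, h2]
  apply lintegral_congr
  intro y
  have hterm1 : ∀ m : ℕ,
      ENNReal.ofReal (wgt θ σ lam Δ x m y) *
        (ENNReal.ofReal (((y - (x + (θ - lam) * Δ + m)) / σ) ^ 2) *
          B.indicator (fun _ => (1 : ℝ≥0∞)) y)
      = ENNReal.ofReal ((a θ lam Δ x m y) ^ 2 / σ ^ 2 * wgt θ σ lam Δ x m y) *
          B.indicator (fun _ => (1 : ℝ≥0∞)) y := by
    intro m
    rw [show ((y - (x + (θ - lam) * Δ + m)) / σ) ^ 2 = (a θ lam Δ x m y) ^ 2 / σ ^ 2 from by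
      rw [div_pow]; congr 2; rw [a]; ring]
    rw [ENNReal.ofReal_mul (by positivity), ← mul_assoc,
      mul_comm (ENNReal.ofReal (wgt θ σ lam Δ x m y)) _]
  rw [tsum_congr hterm1, ENNReal.tsum_mul_right,
    ← ENNReal.ofReal_tsum_of_nonneg
      (fun m => mul_nonneg (by positivity) (wgt_pos hσ hlam hΔ m y).le)
      (summable_sq_wgt hσ hlam hΔ y)]
  have hterm2 : ∀ m : ℕ,
      ENNReal.ofReal (wgt θ σ lam Δ x m y) *
        (ENNReal.ofReal (gfun θ σ lam Δ x y) * B.indicator (fun _ => (1 : ℝ≥0∞)) y)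
      = ENNReal.ofReal (wgt θ σ lam Δ x m y) *
          (ENNReal.ofReal (gfun θ σ lam Δ x y) * B.indicator (fun _ => (1 : ℝ≥0∞)) y) :=
    fun m => rfl
  rw [ENNReal.tsum_mul_right,
    ← ENNReal.ofReal_tsum_of_nonneg (fun m => (wgt_pos hσ hlam hΔ m y).le)
      (summable_wgt hσ hlam hΔ y),
    ← mul_assoc, ← ENNReal.ofReal_mul (tsum_nonneg fun m => (wgt_pos hσ hlam hΔ m y).le)]
  congr 2
  show num θ σ lam Δ x y = pdens θ σ lam Δ x y * gfun θ σ lam Δ x y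
  rw [gfun, mul_div_cancel₀ _ (pdens_pos hσ hlam hΔ y).ne']

end SS

/-- Proposition 1, σ-derivative, corrected form. For every `y` the map
`σ ↦ p^{θ,σ,λ}(Δ,x,y)` is differentiable on `(0,∞)`, and for (law of `X`)-a.e. `y`,
`∂_σ p / p (Δ,x,y) = (1/(σΔ)) E[W² | X = y] − 1/σ`. -/
theorem score_sigma
    {Ω : Type*} [MeasurableSpace Ω] (μ : Measure Ω) [IsProbabilityMeasure μ]
    (Δ x θ σ lam : ℝ) (hΔ : Δ ∈ Set.Ioc (0 : ℝ) 1) (hσ : 0 < σ) (hlam : 0 < lam)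
    (W : Ω → ℝ) (P : Ω → ℕ) (hWm : Measurable W) (hPm : Measurable P)
    (hW : μ.map W = gaussianReal 0 Δ.toNNReal)
    (hP : ∀ m : ℕ, μ (P ⁻¹' {m}) =
      ENNReal.ofReal (Real.exp (-(lam * Δ)) * (lam * Δ) ^ m / (Nat.factorial m : ℝ)))
    (hWP : IndepFun W P μ)
    (X : Ω → ℝ) (hX : X = fun ω => x + θ * Δ + σ * W ω + (P ω : ℝ) - lam * Δ) :
    (∀ y : ℝ, ∀ s ∈ Set.Ioi (0 : ℝ), DifferentiableAt ℝ (fun ς => pdens θ ς lam Δ x y) s) ∧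
      ∃ g : ℝ → ℝ, Measurable g ∧
        (fun ω => g (X ω)) =ᵐ[μ] μ[fun ω => (W ω) ^ 2 | MeasurableSpace.comap X inferInstance] ∧
        ∀ᵐ y ∂(μ.map X),
          deriv (fun ς => pdens θ ς lam Δ x y) σ / pdens θ σ lam Δ x y =
            (1 / (σ * Δ)) * g y - 1 / σ := by

  have hΔpos : 0 < Δ := hΔ.1
  have hXm : Measurable X := by
    rw [hX]; fun_prop
  have hgc : Continuous (fun y => SS.gfun θ σ lam Δ x y) := SS.continuous_gfun_y hσ hlam hΔpos
  constructor
  · intro y s hs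
    exact (SS.hasDerivAt_pdens hlam hΔpos y (Set.mem_Ioi.mp hs)).differentiableAt
  refine ⟨SS.gfun θ σ lam Δ x, hgc.measurable, ?_, ?_⟩
  swap
  · exact ae_of_all _ fun y => SS.score_formula hσ hlam hΔpos y
  -- the conditional expectation part
  have hW2 : Integrable (fun ω => (W ω) ^ 2) μ := by
    have hΔ' : Δ.toNNReal ≠ 0 := by
      simp only [ne_eq, Real.toNNReal_eq_zero, not_le]
      exact hΔpos
    have h0 : Integrable (fun w : ℝ => w ^ 2) (gaussianReal 0 Δ.toNNReal) := by
      rw [gaussianReal_of_var_ne_zero _ hΔ',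
        integrable_withDensity_iff (measurable_gaussianPDF _ _)
          (ae_of_all _ fun y => ENNReal.ofReal_lt_top)]
      have hrw : (fun w : ℝ => w ^ 2 * (gaussianPDF 0 Δ.toNNReal w).toReal)
          = fun w : ℝ => (Real.sqrt (2 * Real.pi * Δ))⁻¹
              * (w ^ 2 * Real.exp (-(2 * Δ)⁻¹ * w ^ 2)) := by
        funext w
        rw [gaussianPDF, ENNReal.toReal_ofReal (gaussianPDFReal_nonneg _ _ _), gaussianPDFReal,
          Real.coe_toNNReal _ hΔpos.le,
          show -(w - 0) ^ 2 / (2 * Δ) = -(2 * Δ)⁻¹ * w ^ 2 from by field_simp; ring]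
        ring
      rw [hrw]
      apply Integrable.const_mul
      have h2 := integrable_rpow_mul_exp_neg_mul_sq
        (b := (2 * Δ)⁻¹) (by positivity) (s := ((2:ℕ):ℝ)) (by norm_num)
      simp_rw [Real.rpow_natCast] at h2
      exact h2
    have := (integrable_map_measure ((continuous_pow 2).aestronglyMeasurable)
      hWm.aemeasurable).mp (hW ▸ h0)
    exact this
  -- the key lintegral identity on preimages
  have key : ∀ B : Set ℝ, MeasurableSet B →
      ∫⁻ ω in X ⁻¹' B, ENNReal.ofReal (SS.gfun θ σ lam Δ x (X ω)) ∂μ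
        = ∫⁻ ω in X ⁻¹' B, ENNReal.ofReal ((W ω) ^ 2) ∂μ := by
    intro B hB
    have hrw : ∀ f : Ω → ℝ≥0∞,
        (fun ω => f ω * B.indicator (fun _ => (1 : ℝ≥0∞)) (X ω))
          = (X ⁻¹' B).indicator f := by
      intro f
      funext ω
      by_cases h : X ω ∈ B
      · simp [Set.indicator_of_mem, h]
      · simp [Set.indicator_of_notMem, h]
    have h := SS.lint_eq μ Δ x θ σ lam hΔpos hσ hlam W P hWm hPm hW hP hWP X hX B hB
    rw [hrw, hrw, lintegral_indicator (hXm hB), lintegral_indicator (hXm hB)] at h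
    exact h.symm
  have hgXint : Integrable (fun ω => SS.gfun θ σ lam Δ x (X ω)) μ := by
    refine ⟨(hgc.measurable.comp hXm).aestronglyMeasurable, ?_⟩
    rw [HasFiniteIntegral]
    calc ∫⁻ ω, ‖SS.gfun θ σ lam Δ x (X ω)‖₊ ∂μ
        = ∫⁻ ω, ENNReal.ofReal (SS.gfun θ σ lam Δ x (X ω)) ∂μ := by
          apply lintegral_congr
          intro ω
          rw [← enorm_eq_nnnorm, ← ofReal_norm_eq_enorm,
            Real.norm_of_nonneg (SS.gfun_nonneg hσ hlam hΔpos (X ω))]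
      _ = ∫⁻ ω, ENNReal.ofReal ((W ω) ^ 2) ∂μ := by
          have h := key Set.univ MeasurableSet.univ
          simpa [Measure.restrict_univ] using h
      _ = ∫⁻ ω, ‖(W ω) ^ 2‖₊ ∂μ := by
          apply lintegral_congr
          intro ω
          rw [← enorm_eq_nnnorm, ← ofReal_norm_eq_enorm, Real.norm_of_nonneg (sq_nonneg (W ω))]
      _ < ⊤ := hW2.2
  have hm : MeasurableSpace.comap X inferInstance ≤ (by infer_instance : MeasurableSpace Ω) :=
    measurable_iff_comap_le.mp hXm
  apply ae_eq_condExp_of_forall_setIntegral_eq hm hW2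
  · exact fun s _ _ => hgXint.integrableOn
  · intro s hs _
    obtain ⟨B, hB, rfl⟩ := MeasurableSpace.measurableSet_comap.mp hs
    rw [integral_eq_lintegral_of_nonneg_ae
        (ae_of_all _ fun ω => SS.gfun_nonneg hσ hlam hΔpos (X ω))
        ((hgc.measurable.comp hXm).aestronglyMeasurable.restrict),
      integral_eq_lintegral_of_nonneg_ae (ae_of_all _ fun ω => sq_nonneg (W ω))
        ((hWm.pow_const 2).aestronglyMeasurable.restrict),
      key B hB]
  · exact ⟨fun ω => SS.gfun θ σ lam Δ x (X ω),
      (hgc.measurable.comp (comap_measurable X)).stronglyMeasurable,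
      EventuallyEq.rfl⟩
end

section
/- (Lemma 2 / Lemma \ref{lemma4}.) A version of the conditional distribution of the jump count P given X is given by: for every m ∈ ℕ and (law of X)-almost every y ∈ ℝ, P(P = m | X = y) = [ e^{−(y − x − m − (θ−λ)Δ)²/(2σ²Δ)} (λΔ)^m/m! ] / [ Σ_{i=0}^∞ e^{−(y − x − i − (θ−λ)Δ)²/(2σ²Δ)} (λΔ)^i/i! ]. -/
open MeasureTheory ProbabilityTheory Real Filter
open scoped ENNReal NNReal

private lemma aux_summable_exp_mul {t : ℝ} (ht : 0 ≤ t) {a : ℕ → ℝ} (ha : ∀ i, a i ≤ 0) :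
    Summable fun i : ℕ => Real.exp (a i) * (t ^ i / (Nat.factorial i : ℝ)) := by
  refine Summable.of_nonneg_of_le (fun i => by positivity) (fun i => ?_)
    (Real.summable_pow_div_factorial t)
  have h1 : Real.exp (a i) ≤ 1 := Real.exp_le_one_iff.mpr (ha i)
  have h2 : 0 ≤ t ^ i / (Nat.factorial i : ℝ) := by positivity
  calc Real.exp (a i) * (t ^ i / (Nat.factorial i : ℝ))
      ≤ 1 * (t ^ i / (Nat.factorial i : ℝ)) := mul_le_mul_of_nonneg_right h1 h2
    _ = _ := one_mul _

/-- Lemma 2. A version of the conditional distribution of the jump count `P`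
given `X`: for every `m` and (law of `X`)-a.e. `y`,
`P(P = m | X = y)` equals the explicit Gaussian–Poisson ratio. -/
theorem cond_law_jump_count
    {Ω : Type*} [MeasurableSpace Ω] (μ : Measure Ω) [IsProbabilityMeasure μ]
    (Δ x θ σ lam : ℝ) (hΔ : Δ ∈ Set.Ioc (0 : ℝ) 1) (hσ : 0 < σ) (hlam : 0 < lam)
    (W : Ω → ℝ) (P : Ω → ℕ) (hWm : Measurable W) (hPm : Measurable P)
    (hW : μ.map W = gaussianReal 0 Δ.toNNReal)
    (hP : ∀ m : ℕ, μ (P ⁻¹' {m}) =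
      ENNReal.ofReal (Real.exp (-(lam * Δ)) * (lam * Δ) ^ m / (Nat.factorial m : ℝ)))
    (hWP : IndepFun W P μ)
    (X : Ω → ℝ) (hX : X = fun ω => x + θ * Δ + σ * W ω + (P ω : ℝ) - lam * Δ) :
    ∀ m : ℕ, ∀ᵐ y ∂(μ.map X),
      condDistrib P X μ y {m} =
        ENNReal.ofReal
          ((Real.exp (-(y - x - (m : ℝ) - (θ - lam) * Δ) ^ 2 / (2 * σ ^ 2 * Δ)) *
              ((lam * Δ) ^ m / (Nat.factorial m : ℝ))) /
            ∑' i : ℕ,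
              Real.exp (-(y - x - (i : ℝ) - (θ - lam) * Δ) ^ 2 / (2 * σ ^ 2 * Δ)) *
                ((lam * Δ) ^ i / (Nat.factorial i : ℝ))) := by
  obtain ⟨hΔ0, -⟩ := hΔ
  have hXm : Measurable X := by
    rw [hX]
    fun_prop
  have hσ2Δ : (0:ℝ) < 2 * σ ^ 2 * Δ := by positivity
  have ht0 : (0:ℝ) < lam * Δ := mul_pos hlam hΔ0
  set g : ℝ → ℕ → ℝ := fun y i =>
    Real.exp (-(y - x - (i : ℝ) - (θ - lam) * Δ) ^ 2 / (2 * σ ^ 2 * Δ)) *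
      ((lam * Δ) ^ i / (Nat.factorial i : ℝ)) with hg
  set S : ℝ → ℝ := fun y => ∑' i, g y i with hS
  have hgpos : ∀ y i, 0 < g y i := fun y i =>
    mul_pos (Real.exp_pos _) (div_pos (pow_pos ht0 i)
      (Nat.cast_pos.mpr (Nat.factorial_pos i)))
  have hSsum : ∀ y, Summable (g y) := fun y =>
    aux_summable_exp_mul ht0.le fun i =>
      div_nonpos_of_nonpos_of_nonneg (neg_nonpos.mpr (sq_nonneg _)) hσ2Δ.le
  have hSpos : ∀ y, 0 < S y := fun y =>
    lt_of_lt_of_le (hgpos y 0) (Summable.le_tsum (hSsum y) 0 fun i _ => (hgpos y i).le)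
  have hgmeas : ∀ i, Measurable fun y => g y i := by
    intro i; rw [hg]; fun_prop
  have hSmeas : Measurable S := by
    have hre : S = fun y => (∑' i, ENNReal.ofReal (g y i)).toReal := by
      funext y
      rw [← ENNReal.ofReal_tsum_of_nonneg (fun i => (hgpos y i).le) (hSsum y),
        ENNReal.toReal_ofReal (hSpos y).le]
    rw [hre]
    exact (Measurable.ennreal_tsum fun i => (hgmeas i).ennreal_ofReal).ennreal_toReal
  set r : ℝ → ℕ → ℝ≥0∞ := fun y m => ENNReal.ofReal (g y m / S y) with hr
  have hrmeas : ∀ m, Measurable fun y => r y m := fun m =>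
    ((hgmeas m).div hSmeas).ennreal_ofReal
  set κ : Kernel ℝ ℕ :=
    { toFun := fun y => Measure.sum fun m => r y m • Measure.dirac m
      measurable' := by
        refine Measure.measurable_of_measurable_coe _ fun B hB => ?_
        simp_rw [Measure.sum_apply _ hB, Measure.smul_apply, smul_eq_mul]
        exact Measurable.ennreal_tsum fun m => (hrmeas m).mul_const _ } with hκ
  have hκapp : ∀ y (B : Set ℕ), κ y B = ∑' m, B.indicator (r y) m := by
    intro y B
    have hB : MeasurableSet B := trivial
    show (Measure.sum fun m => r y m • Measure.dirac m) B = _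
    rw [Measure.sum_apply _ hB]
    refine tsum_congr fun m => ?_
    rw [Measure.smul_apply, Measure.dirac_apply' _ hB, smul_eq_mul]
    by_cases hm : m ∈ B
    · simp [Set.indicator_of_mem hm]
    · simp [Set.indicator_of_notMem hm]
  have hκsingle : ∀ y (m : ℕ), κ y {m} = r y m := by
    intro y m
    rw [hκapp]
    rw [tsum_eq_single m fun i hi => Set.indicator_of_notMem (by simp [hi]) _]
    exact Set.indicator_of_mem rfl _
  have hκmarkov : IsMarkovKernel κ := by
    constructor
    intro y
    constructor
    rw [hκapp y Set.univ]
    simp only [Set.indicator_univ, hr]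
    rw [← ENNReal.ofReal_tsum_of_nonneg (fun i => div_nonneg (hgpos y i).le (hSpos y).le)
      ((hSsum y).div_const _), tsum_div_const, div_self (hSpos y).ne', ENNReal.ofReal_one]
  set pr : ℕ → ℝ := fun m => Real.exp (-(lam * Δ)) * (lam * Δ) ^ m / (Nat.factorial m : ℝ)
    with hpr
  have hpr0 : ∀ m, 0 ≤ pr m := fun m => by
    rw [hpr]
    positivity
  set c : ℝ := x + (θ - lam) * Δ with hc
  set τ : ℝ≥0 := NNReal.mk (σ ^ 2) (sq_nonneg σ) * Δ.toNNReal with hτ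
  have hτcoe : (τ : ℝ) = σ ^ 2 * Δ := by
    rw [hτ, NNReal.coe_mul, Real.coe_toNNReal _ hΔ0.le, NNReal.coe_mk]
  have hτ0 : τ ≠ 0 := by
    intro h
    have : (τ : ℝ) = 0 := by rw [h]; simp
    rw [hτcoe] at this
    nlinarith
  have hjoint : ∀ (A : Set ℝ), MeasurableSet A → ∀ m : ℕ,
      μ (X ⁻¹' A ∩ P ⁻¹' {m}) = ENNReal.ofReal (pr m) * gaussianReal (c + m) τ A := by
    intro A hA m
    have hev : X ⁻¹' A ∩ P ⁻¹' {m} = W ⁻¹' ((fun w => σ * w + (c + m)) ⁻¹' A) ∩ P ⁻¹' {m} := by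
      ext ω
      simp only [Set.mem_inter_iff, Set.mem_preimage, Set.mem_singleton_iff, hX]
      constructor
      · rintro ⟨h1, h2⟩
        refine ⟨?_, h2⟩
        have : σ * W ω + (c + (m : ℝ)) = x + θ * Δ + σ * W ω + (P ω : ℝ) - lam * Δ := by
          rw [h2, hc]; ring
        rw [this]; exact h1
      · rintro ⟨h1, h2⟩
        refine ⟨?_, h2⟩
        have : x + θ * Δ + σ * W ω + (P ω : ℝ) - lam * Δ = σ * W ω + (c + (m : ℝ)) := by
          rw [h2, hc]; ring
        rw [this]; exact h1
    have hTm : MeasurableSet ((fun w => σ * w + (c + m)) ⁻¹' A) :=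
      ((measurable_id.const_mul σ).add_const _) hA
    rw [hev, hWP.measure_inter_preimage_eq_mul _ _ hTm (measurableSet_singleton m),
      ← Measure.map_apply hWm hTm, hW, hP m, mul_comm]
    congr 1
    have hmm : (gaussianReal 0 Δ.toNNReal) ((fun w => σ * w + (c + m)) ⁻¹' A)
        = ((gaussianReal 0 Δ.toNNReal).map (fun w => σ * w + (c + m))) A := by
      rw [Measure.map_apply (by fun_prop) hA]
    rw [hmm]
    have hcomp : (fun w : ℝ => σ * w + (c + m)) = (fun u => u + (c + m)) ∘ (fun w => σ * w) := rfl
    rw [hcomp, ← Measure.map_map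
      (show Measurable (fun u : ℝ => u + (c + (m : ℝ))) by fun_prop)
      (show Measurable (fun w : ℝ => σ * w) by fun_prop)]
    have h1 : (gaussianReal 0 Δ.toNNReal).map (fun w => σ * w)
        = gaussianReal 0 (NNReal.mk (σ ^ 2) (sq_nonneg σ) * Δ.toNNReal) := by
      have := gaussianReal_map_const_mul (μ := 0) (v := Δ.toNNReal) σ
      simpa using this
    rw [h1]
    have h2 := gaussianReal_map_add_const (μ := 0) (v := NNReal.mk (σ ^ 2) (sq_nonneg σ) * Δ.toNNReal) (c + m)
    rw [h2]
    norm_num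
    rfl
  have hmapX : μ.map X = Measure.sum fun m : ℕ =>
      ENNReal.ofReal (pr m) • gaussianReal (c + m) τ := by
    ext A hA
    rw [Measure.map_apply hXm hA, Measure.sum_apply _ hA]
    have hAdec : X ⁻¹' A = ⋃ m : ℕ, X ⁻¹' A ∩ P ⁻¹' {m} := by
      ext ω
      simp only [Set.mem_iUnion, Set.mem_inter_iff, Set.mem_preimage, Set.mem_singleton_iff]
      exact ⟨fun h => ⟨P ω, h, rfl⟩, fun ⟨m, h, _⟩ => h⟩
    rw [hAdec, measure_iUnion]
    · exact tsum_congr fun m => by rw [hjoint A hA m, Measure.smul_apply, smul_eq_mul]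
    · intro i j hij
      refine Set.disjoint_left.mpr fun ω hi hj => hij ?_
      rw [← hi.2, ← hj.2]
    · exact fun m => (hXm hA).inter (hPm (measurableSet_singleton m))
  set fhat : ℝ → ℝ≥0∞ := fun y =>
    ∑' m : ℕ, ENNReal.ofReal (pr m) * gaussianPDF (c + m) τ y with hfhat
  have hfhatmeas : Measurable fhat := by
    refine Measurable.ennreal_tsum fun m => Measurable.const_mul ?_ _
    exact measurable_gaussianPDF _ _
  have hmapX' : μ.map X = volume.withDensity fhat := by
    rw [hmapX]
    have h1 : ∀ m : ℕ, ENNReal.ofReal (pr m) • gaussianReal (c + m) τ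
        = volume.withDensity (fun y => ENNReal.ofReal (pr m) * gaussianPDF (c + m) τ y) := by
      intro m
      rw [gaussianReal_of_var_ne_zero _ hτ0, ← withDensity_smul _ (measurable_gaussianPDF _ _)]
      rfl
    simp_rw [h1]
    rw [← withDensity_tsum (f := fun (m : ℕ) (y : ℝ) => ENNReal.ofReal (pr m) * gaussianPDF (c + m) τ y) fun m => (measurable_gaussianPDF (c + m) τ).const_mul _]
    congr 1
    funext y
    exact ENNReal.tsum_apply
  haveI := hκmarkov
  haveI hmapXP : IsProbabilityMeasure (μ.map fun ω => (X ω, P ω)) :=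
    Measure.isProbabilityMeasure_map (hXm.prodMk hPm).aemeasurable
  haveI hmapXprob : IsProbabilityMeasure (μ.map X) := Measure.isProbabilityMeasure_map hXm.aemeasurable
  have hK0 : (0:ℝ) ≤ Real.exp (-(lam * Δ)) * (Real.sqrt (2 * π * (τ : ℝ)))⁻¹ := by positivity
  set K : ℝ := Real.exp (-(lam * Δ)) * (Real.sqrt (2 * π * (τ : ℝ)))⁻¹ with hKdef
  have hterm : ∀ (m : ℕ) (y : ℝ),
      ENNReal.ofReal (pr m) * gaussianPDF (c + m) τ y = ENNReal.ofReal (K * g y m) := by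
    intro m y
    rw [gaussianPDF, ← ENNReal.ofReal_mul (hpr0 m)]
    congr 1
    have hexp : -(y - (c + (m : ℝ))) ^ 2 / (2 * (τ : ℝ))
        = -(y - x - (m : ℝ) - (θ - lam) * Δ) ^ 2 / (2 * σ ^ 2 * Δ) := by
      rw [hτcoe, hc]; ring_nf
    simp only [gaussianPDFReal, hpr, hg, hKdef]
    rw [hexp]
    ring
  have hfhatval : ∀ y, fhat y = ENNReal.ofReal (K * S y) := by
    intro y
    rw [hfhat]
    simp only []
    calc (∑' m : ℕ, ENNReal.ofReal (pr m) * gaussianPDF (c + m) τ y)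
        = ∑' m : ℕ, ENNReal.ofReal (K * g y m) := tsum_congr fun m => hterm m y
      _ = ENNReal.ofReal (∑' m : ℕ, K * g y m) :=
          (ENNReal.ofReal_tsum_of_nonneg (fun i => mul_nonneg hK0 (hgpos y i).le)
            ((hSsum y).mul_left K)).symm
      _ = ENNReal.ofReal (K * S y) := by rw [(hSsum y).tsum_mul_left K, hS]
  have hcomp : (μ.map fun ω => (X ω, P ω)) = (μ.map X) ⊗ₘ κ := by
    refine ext_of_generate_finite _ generateFrom_prod.symm isPiSystem_prod ?_ ?_
    · rintro s ⟨A, hA, B, hB, rfl⟩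
      simp only [Set.mem_setOf_eq] at hA hB
      have hLHS : (μ.map fun ω => (X ω, P ω)) (A ×ˢ B)
          = ∑' m : ℕ,
              B.indicator (fun m => ENNReal.ofReal (pr m) * gaussianReal (c + m) τ A) m := by
        rw [Measure.map_apply (hXm.prodMk hPm) (hA.prod hB), Set.mk_preimage_prod]
        have hdec : X ⁻¹' A ∩ P ⁻¹' B = ⋃ m : ℕ, X ⁻¹' A ∩ P ⁻¹' (B ∩ {m}) := by
          ext ω
          simp only [Set.mem_iUnion, Set.mem_inter_iff, Set.mem_preimage, Set.mem_singleton_iff]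
          constructor
          · rintro ⟨h1, h2⟩; exact ⟨P ω, h1, h2, rfl⟩
          · rintro ⟨m, h1, h2, -⟩; exact ⟨h1, h2⟩
        rw [hdec, measure_iUnion]
        · refine tsum_congr fun m => ?_
          by_cases hm : m ∈ B
          · rw [Set.inter_eq_self_of_subset_right (Set.singleton_subset_iff.mpr hm),
              hjoint A hA m, Set.indicator_of_mem hm]
          · rw [Set.inter_singleton_eq_empty.mpr hm]
            simp [Set.indicator_of_notMem hm]
        · intro i j hij
          refine Set.disjoint_left.mpr fun ω hi hj => hij ?_
          rw [← hi.2.2, ← hj.2.2]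
        · exact fun m => (hXm hA).inter (hPm (by trivial))
      rw [hLHS, Measure.compProd_apply_prod hA hB, hmapX']
      rw [setLIntegral_withDensity_eq_setLIntegral_mul volume hfhatmeas
        (κ.measurable_coe hB) hA]
      symm
      have hpoint : ∀ y, fhat y * κ y B
          = ∑' m : ℕ,
              B.indicator (fun m => ENNReal.ofReal (pr m) * gaussianPDF (c + m) τ y) m := by
        intro y
        rw [hfhatval y, hκapp y B, ← ENNReal.tsum_mul_left]
        refine tsum_congr fun m => ?_
        by_cases hm : m ∈ B
        · rw [Set.indicator_of_mem hm, Set.indicator_of_mem hm, hterm, hr]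
          simp only []
          rw [← ENNReal.ofReal_mul (mul_nonneg hK0 (hSpos y).le)]
          congr 1
          have hSne : S y ≠ 0 := (hSpos y).ne'
          field_simp
        · simp [Set.indicator_of_notMem hm]
      calc ∫⁻ y in A, (fhat * fun y => κ y B) y
          = ∫⁻ y in A, ∑' m : ℕ,
              B.indicator (fun m => ENNReal.ofReal (pr m) * gaussianPDF (c + m) τ y) m := by
            refine lintegral_congr fun y => ?_
            rw [Pi.mul_apply]
            exact hpoint y
        _ = ∑' m : ℕ, ∫⁻ y in A,
              B.indicator (fun m => ENNReal.ofReal (pr m) * gaussianPDF (c + m) τ y) m := by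
            refine lintegral_tsum fun m => ?_
            by_cases hm : m ∈ B
            · simp only [Set.indicator_of_mem hm]
              exact ((measurable_gaussianPDF _ _).const_mul _).aemeasurable
            · simp [Set.indicator_of_notMem hm]
        _ = ∑' m : ℕ,
              B.indicator (fun m => ENNReal.ofReal (pr m) * gaussianReal (c + m) τ A) m := by
            refine tsum_congr fun m => ?_
            by_cases hm : m ∈ B
            · simp only [Set.indicator_of_mem hm]
              rw [lintegral_const_mul _ (measurable_gaussianPDF _ _),
                ← gaussianReal_apply _ hτ0]
            · simp [Set.indicator_of_notMem hm]
    · rw [measure_univ]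
      rw [← Set.univ_prod_univ, Measure.compProd_apply_prod MeasurableSet.univ
        MeasurableSet.univ]
      simp [measure_univ]
  have hfst : (μ.map fun ω => (X ω, P ω)).fst = μ.map X := Measure.fst_map_prodMk hPm
  have huniq : ∀ᵐ y ∂(μ.map X), κ y = (μ.map fun ω => (X ω, P ω)).condKernel y := by
    rw [← hfst]
    exact eq_condKernel_of_measure_eq_compProd κ (by rw [hfst]; exact hcomp)
  intro m
  filter_upwards [huniq] with y hy
  rw [condDistrib_def, ← hy, hκsingle, hr]
end

section
/- (Lemma 4, first bound / bound on S_{1,1,j}^p.) Let σ, σ̄, λ̄ > 0, Δ ∈ (0,1], δ ∈ ℝ, α ∈ (0,1/2), j, p ∈ ℕ, and b ∈ ℝ with |b| ≤ Δ^α. Assume σΔ^α + |δ|Δ ≤ 1/4. Then [ Σ_{m<j} m^p e^{−(σb + j − m + δΔ)²/(2σ̄²Δ)} (λ̄Δ)^m/m! ] / [ Σ_{i=0}^∞ e^{−(σb + j − i + δΔ)²/(2σ̄²Δ)} (λ̄Δ)^i/i! ] ≤ (j!/(λ̄Δ)^j) Σ_{m<j} m^p e^{−(j−m)²/(4σ̄²Δ)}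 (λ̄Δ)^m/m!. -/
open MeasureTheory Real Filter

/-- Lemma 4, bound on `S_{1,1,j}^p`. -/
theorem bound_S11
    (σ σb lamb Δ δ α : ℝ) (hσ : 0 < σ) (hσb : 0 < σb) (hlamb : 0 < lamb)
    (hΔ : Δ ∈ Set.Ioc (0 : ℝ) 1) (hα : α ∈ Set.Ioo (0 : ℝ) (1 / 2))
    (j p : ℕ) (b : ℝ) (hb : |b| ≤ Δ ^ α) (hsmall : σ * Δ ^ α + |δ| * Δ ≤ 1 / 4) :
    (∑ m ∈ Finset.range j, (m : ℝ) ^ p *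
        Real.exp (-(σ * b + (j : ℝ) - (m : ℝ) + δ * Δ) ^ 2 / (2 * σb ^ 2 * Δ)) *
        ((lamb * Δ) ^ m / (Nat.factorial m : ℝ))) /
      (∑' i : ℕ,
        Real.exp (-(σ * b + (j : ℝ) - (i : ℝ) + δ * Δ) ^ 2 / (2 * σb ^ 2 * Δ)) *
        ((lamb * Δ) ^ i / (Nat.factorial i : ℝ))) ≤
      ((Nat.factorial j : ℝ) / (lamb * Δ) ^ j) *
        ∑ m ∈ Finset.range j, (m : ℝ) ^ p *
          Real.exp (-((j : ℝ) - (m : ℝ)) ^ 2 / (4 * σb ^ 2 * Δ)) *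
          ((lamb * Δ) ^ m / (Nat.factorial m : ℝ)) := by
  obtain ⟨hΔ0, hΔ1⟩ := hΔ
  set x : ℝ := σ * b + δ * Δ with hx
  have hc : 0 < 2 * σb ^ 2 * Δ := by positivity
  have hxle : |x| ≤ 1 / 4 := by
    calc |x| ≤ |σ * b| + |δ * Δ| := abs_add_le _ _
      _ = σ * |b| + |δ| * Δ := by
          rw [abs_mul, abs_mul, abs_of_pos hσ, abs_of_pos hΔ0]
      _ ≤ σ * Δ ^ α + |δ| * Δ := by nlinarith
      _ ≤ 1 / 4 := hsmall
  set f : ℕ → ℝ := fun i => Real.exp (-(σ * b + (j : ℝ) - (i : ℝ) + δ * Δ) ^ 2 / (2 * σb ^ 2 * Δ)) *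
        ((lamb * Δ) ^ i / (Nat.factorial i : ℝ)) with hf
  have hfnn : ∀ i, 0 ≤ f i := by
    intro i
    simp only [hf]
    have h2 : (0:ℝ) ≤ (lamb * Δ) ^ i / (Nat.factorial i : ℝ) := by positivity
    exact mul_nonneg (Real.exp_pos _).le h2
  have hsum : Summable f := by
    apply Summable.of_nonneg_of_le hfnn (fun i => ?_) (Real.summable_pow_div_factorial (lamb * Δ))
    have h1 : Real.exp (-(σ * b + (j : ℝ) - (i : ℝ) + δ * Δ) ^ 2 / (2 * σb ^ 2 * Δ)) ≤ 1 := by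
      apply Real.exp_le_one_iff.2
      exact div_nonpos_of_nonpos_of_nonneg (neg_nonpos.2 (sq_nonneg _)) (le_of_lt hc)
    calc f i ≤ 1 * ((lamb * Δ) ^ i / (Nat.factorial i : ℝ)) := by
          apply mul_le_mul_of_nonneg_right h1; positivity
      _ = (lamb * Δ) ^ i / (Nat.factorial i : ℝ) := one_mul _
  set E : ℝ := Real.exp (-x ^ 2 / (2 * σb ^ 2 * Δ)) with hE
  have hE0 : 0 < E := Real.exp_pos _
  have hDj : E * ((lamb * Δ) ^ j / (Nat.factorial j : ℝ)) ≤ ∑' i, f i := by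
    have hj : f j = E * ((lamb * Δ) ^ j / (Nat.factorial j : ℝ)) := by
      have : σ * b + (j : ℝ) - (j : ℝ) + δ * Δ = x := by ring
      rw [hf]; simp only [this]; rfl
    rw [← hj]
    exact Summable.le_tsum hsum j (fun i _ => hfnn i)
  have hden : 0 < ∑' i, f i := by
    have : (0:ℝ) < E * ((lamb * Δ) ^ j / (Nat.factorial j : ℝ)) := by positivity
    linarith
  -- numerator termwise bound
  have hnum : (∑ m ∈ Finset.range j, (m : ℝ) ^ p *
        Real.exp (-(σ * b + (j : ℝ) - (m : ℝ) + δ * Δ) ^ 2 / (2 * σb ^ 2 * Δ)) *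
        ((lamb * Δ) ^ m / (Nat.factorial m : ℝ))) ≤
      E * ∑ m ∈ Finset.range j, (m : ℝ) ^ p *
          Real.exp (-((j : ℝ) - (m : ℝ)) ^ 2 / (4 * σb ^ 2 * Δ)) *
          ((lamb * Δ) ^ m / (Nat.factorial m : ℝ)) := by
    rw [Finset.mul_sum]
    apply Finset.sum_le_sum
    intro m hm
    have hmj : (m : ℕ) < j := Finset.mem_range.1 hm
    set k : ℝ := (j : ℝ) - (m : ℝ) with hk
    have hk1 : 1 ≤ k := by
      rw [hk]
      have : (m : ℝ) + 1 ≤ (j : ℝ) := by exact_mod_cast Nat.succ_le_of_lt hmj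
      linarith
    have hkey : x ^ 2 + k ^ 2 / 2 ≤ (x + k) ^ 2 := by
      have h1 : -(1/4 : ℝ) ≤ x := by
        have := abs_le.1 hxle; linarith [this.1]
      nlinarith
    have harg : σ * b + (j : ℝ) - (m : ℝ) + δ * Δ = x + k := by rw [hx, hk]; ring
    rw [harg]
    have hexp : Real.exp (-(x + k) ^ 2 / (2 * σb ^ 2 * Δ)) ≤
        E * Real.exp (-k ^ 2 / (4 * σb ^ 2 * Δ)) := by
      rw [hE, ← Real.exp_add]
      apply Real.exp_le_exp.2
      have h4 : -x ^ 2 / (2 * σb ^ 2 * Δ) + -k ^ 2 / (4 * σb ^ 2 * Δ)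
          = (-x ^ 2 + -(k ^ 2 / 2)) / (2 * σb ^ 2 * Δ) := by ring
      rw [h4]
      gcongr
      linarith
    have h1 : (0:ℝ) ≤ (m : ℝ) ^ p := by positivity
    have h2 : (0:ℝ) ≤ (lamb * Δ) ^ m / (Nat.factorial m : ℝ) := by positivity
    calc (m : ℝ) ^ p * Real.exp (-(x + k) ^ 2 / (2 * σb ^ 2 * Δ)) *
          ((lamb * Δ) ^ m / (Nat.factorial m : ℝ))
        ≤ (m : ℝ) ^ p * (E * Real.exp (-k ^ 2 / (4 * σb ^ 2 * Δ))) *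
          ((lamb * Δ) ^ m / (Nat.factorial m : ℝ)) := by
          apply mul_le_mul_of_nonneg_right (mul_le_mul_of_nonneg_left hexp h1) h2
      _ = E * ((m : ℝ) ^ p * Real.exp (-k ^ 2 / (4 * σb ^ 2 * Δ)) *
          ((lamb * Δ) ^ m / (Nat.factorial m : ℝ))) := by ring
  set N : ℝ := ∑ m ∈ Finset.range j, (m : ℝ) ^ p *
          Real.exp (-((j : ℝ) - (m : ℝ)) ^ 2 / (4 * σb ^ 2 * Δ)) *
          ((lamb * Δ) ^ m / (Nat.factorial m : ℝ)) with hN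
  have hNnn : 0 ≤ N := by
    apply Finset.sum_nonneg
    intro m _
    have := Real.exp_pos (-((j : ℝ) - (m : ℝ)) ^ 2 / (4 * σb ^ 2 * Δ))
    positivity
  rw [div_le_iff₀ hden]
  have hRHSnn : 0 ≤ (Nat.factorial j : ℝ) / (lamb * Δ) ^ j * N := by positivity
  calc (∑ m ∈ Finset.range j, (m : ℝ) ^ p *
        Real.exp (-(σ * b + (j : ℝ) - (m : ℝ) + δ * Δ) ^ 2 / (2 * σb ^ 2 * Δ)) *
        ((lamb * Δ) ^ m / (Nat.factorial m : ℝ)))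
      ≤ E * N := hnum
    _ = (Nat.factorial j : ℝ) / (lamb * Δ) ^ j * N *
        (E * ((lamb * Δ) ^ j / (Nat.factorial j : ℝ))) := by
        have h1 : ((Nat.factorial j : ℝ)) ≠ 0 := Nat.cast_ne_zero.2 (Nat.factorial_ne_zero j)
        have h2 : (lamb * Δ) ^ j ≠ 0 := by positivity
        field_simp
    _ ≤ (Nat.factorial j : ℝ) / (lamb * Δ) ^ j * N * ∑' i, f i := by
        apply mul_le_mul_of_nonneg_left hDj hRHSnn
end

section
/- (Lemma 4, second bound / bound on S_{1,2,j}^p.) Let σ, σ̄, λ̄ > 0, Δ ∈ (0,1], δ ∈ ℝ, α ∈ (0,1/2), j, p ∈ ℕ, and b ∈ ℝ with |b| ≤ Δ^α. Assume σΔ^α + |δ|Δ ≤ 1/4. Then [ Σ_{m>j} m^p e^{−(σb + j − m + δΔ)²/(2σ̄²Δ)} (λ̄Δ)^m/m! ] / [ Σ_{i=0}^∞ e^{−(σb + j − i + δΔ)²/(2σ̄²Δ)} (λ̄Δ)^i/i! ] ≤ e^{−1/(4σ̄²Δ)} Σ_{ℓ≥1} (ℓ+j)^p (λ̄Δ)^ℓ/ℓ!.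 -/
open MeasureTheory Real Filter

lemma summable_aux (p : ℕ) (x : ℝ) (hx : 0 ≤ x) :
    Summable (fun n : ℕ => (n : ℝ) ^ p * (x ^ n / (Nat.factorial n : ℝ))) := by
  refine Summable.of_nonneg_of_le (fun n => ?_) (fun n => ?_)
    (Real.summable_pow_div_factorial ((2 : ℝ) ^ p * x))
  · positivity
  · have h1 : (n : ℝ) ^ p ≤ ((2 : ℝ) ^ p) ^ n := by
      calc (n : ℝ) ^ p ≤ ((2 : ℝ) ^ n) ^ p := by
            apply pow_le_pow_left₀ (by positivity)
            exact_mod_cast (Nat.lt_two_pow_self (n := n)).le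
        _ = ((2 : ℝ) ^ p) ^ n := by rw [← pow_mul, ← pow_mul, Nat.mul_comm]
    calc (n : ℝ) ^ p * (x ^ n / (Nat.factorial n : ℝ))
        ≤ ((2 : ℝ) ^ p) ^ n * (x ^ n / (Nat.factorial n : ℝ)) := by
          apply mul_le_mul_of_nonneg_right h1; positivity
      _ = ((2 : ℝ) ^ p * x) ^ n / (Nat.factorial n : ℝ) := by
          rw [mul_pow]; ring

/-- Lemma 4, bound on `S_{1,2,j}^p`. -/
theorem bound_S12
    (σ σb lamb Δ δ α : ℝ) (hσ : 0 < σ) (hσb : 0 < σb) (hlamb : 0 < lamb)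
    (hΔ : Δ ∈ Set.Ioc (0 : ℝ) 1) (hα : α ∈ Set.Ioo (0 : ℝ) (1 / 2))
    (j p : ℕ) (b : ℝ) (hb : |b| ≤ Δ ^ α) (hsmall : σ * Δ ^ α + |δ| * Δ ≤ 1 / 4) :
    (∑' m : ℕ, if j < m then
        (m : ℝ) ^ p *
          Real.exp (-(σ * b + (j : ℝ) - (m : ℝ) + δ * Δ) ^ 2 / (2 * σb ^ 2 * Δ)) *
          ((lamb * Δ) ^ m / (Nat.factorial m : ℝ))
      else 0) /
      (∑' i : ℕ,
        Real.exp (-(σ * b + (j : ℝ) - (i : ℝ) + δ * Δ) ^ 2 / (2 * σb ^ 2 * Δ)) *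
        ((lamb * Δ) ^ i / (Nat.factorial i : ℝ))) ≤
      Real.exp (-1 / (4 * σb ^ 2 * Δ)) *
        ∑' l : ℕ, if 1 ≤ l then
            ((l : ℝ) + (j : ℝ)) ^ p * ((lamb * Δ) ^ l / (Nat.factorial l : ℝ))
          else 0 := by
  obtain ⟨hΔ0, hΔ1⟩ := hΔ
  set x : ℝ := lamb * Δ with hxdef
  have hx : 0 < x := mul_pos hlamb hΔ0
  set c : ℝ := σ * b + δ * Δ with hcdef
  have hc : |c| ≤ 1 / 4 := by
    calc |c| ≤ |σ * b| + |δ * Δ| := abs_add_le _ _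
      _ = σ * |b| + |δ| * Δ := by
          rw [abs_mul, abs_mul, abs_of_pos hσ, abs_of_pos hΔ0]
      _ ≤ σ * Δ ^ α + |δ| * Δ := by
          have := mul_le_mul_of_nonneg_left hb hσ.le; linarith
      _ ≤ 1 / 4 := hsmall
  have hden : 0 < 2 * σb ^ 2 * Δ := by positivity
  -- abbreviations
  set E : ℕ → ℝ := fun i =>
    Real.exp (-(σ * b + (j : ℝ) - (i : ℝ) + δ * Δ) ^ 2 / (2 * σb ^ 2 * Δ)) with hE
  set F : ℕ → ℝ := fun m => if j < m then (m : ℝ) ^ p * E m * (x ^ m / (Nat.factorial m : ℝ))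
    else 0 with hF
  set G : ℕ → ℝ := fun l => if 1 ≤ l then ((l : ℝ) + (j : ℝ)) ^ p *
    (x ^ l / (Nat.factorial l : ℝ)) else 0 with hG
  have hE1 : ∀ i, E i ≤ 1 := fun i => Real.exp_le_one_iff.mpr (by
    apply div_nonpos_of_nonpos_of_nonneg
    · simp [neg_nonpos]; positivity
    · positivity)
  have hEpos : ∀ i, 0 < E i := fun i => Real.exp_pos _
  have hFnonneg : ∀ m, 0 ≤ F m := by
    intro m; simp only [hF]; split
    · have := (hEpos m).le; positivity
    · exact le_rfl

  have hFle : ∀ m : ℕ, F m ≤ (m : ℝ) ^ p * (x ^ m / (Nat.factorial m : ℝ)) := by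
    intro m; simp only [hF]; split
    · have h1 := hE1 m
      have h2 : (0:ℝ) ≤ (m : ℝ) ^ p := by positivity
      have h3 : (0:ℝ) ≤ x ^ m / (Nat.factorial m : ℝ) := by positivity
      calc (m:ℝ) ^ p * E m * (x ^ m / (Nat.factorial m : ℝ))
          ≤ (m:ℝ) ^ p * 1 * (x ^ m / (Nat.factorial m : ℝ)) :=
            mul_le_mul_of_nonneg_right (mul_le_mul_of_nonneg_left h1 h2) h3
        _ = (m:ℝ) ^ p * (x ^ m / (Nat.factorial m : ℝ)) := by ring
    · positivity
  have hsumF : Summable F :=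
    Summable.of_nonneg_of_le hFnonneg hFle (summable_aux p x hx.le)
  have hsumD : Summable (fun i : ℕ => E i * (x ^ i / (Nat.factorial i : ℝ))) := by
    apply Summable.of_nonneg_of_le (fun i => by have := (hEpos i).le; positivity)
      (fun i => ?_) (Real.summable_pow_div_factorial x)
    have h3 : (0:ℝ) ≤ x ^ i / (Nat.factorial i : ℝ) := by positivity
    nlinarith [hE1 i, hEpos i]
  set dj : ℝ := E j * (x ^ j / (Nat.factorial j : ℝ)) with hdj
  have hdjpos : 0 < dj := by
    have := hEpos j
    have : (0:ℝ) < x ^ j / (Nat.factorial j : ℝ) := by positivity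
    exact mul_pos (hEpos j) this
  have hDge : dj ≤ ∑' i : ℕ, E i * (x ^ i / (Nat.factorial i : ℝ)) := by
    exact Summable.le_tsum hsumD j (fun i _ => by have := (hEpos i).le; positivity)
  -- summability of G and the shifted comparison
  have hsumG : Summable G := by
    apply Summable.of_nonneg_of_le (fun l => ?_) (fun l => ?_)
      (summable_aux p x hx.le |>.mul_left ((2:ℝ)^p * (j+1:ℝ)^p))
    · simp only [hG]; split
      · positivity
      · exact le_rfl
    · simp only [hG]; split
      · rename_i hl
        have hlj : ((l : ℝ) + (j : ℝ)) ^ p ≤ (2:ℝ)^p * ((j:ℝ)+1)^p * (l:ℝ)^p := by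
          have h1 : (1:ℝ) ≤ (l:ℝ) := by exact_mod_cast hl
          have : ((l : ℝ) + (j : ℝ)) ≤ 2 * ((j:ℝ)+1) * l := by nlinarith [Nat.cast_nonneg (α := ℝ) j]
          calc ((l : ℝ) + (j : ℝ)) ^ p ≤ (2 * ((j:ℝ)+1) * (l:ℝ)) ^ p := by
                apply pow_le_pow_left₀ (by positivity) this
            _ = (2:ℝ)^p * ((j:ℝ)+1)^p * (l:ℝ)^p := by rw [mul_pow, mul_pow]
        have h3 : (0:ℝ) ≤ x ^ l / (Nat.factorial l : ℝ) := by positivity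
        calc ((l : ℝ) + (j : ℝ)) ^ p * (x ^ l / (Nat.factorial l : ℝ))
            ≤ (2:ℝ)^p * ((j:ℝ)+1)^p * (l:ℝ)^p * (x ^ l / (Nat.factorial l : ℝ)) :=
              mul_le_mul_of_nonneg_right hlj h3
          _ = (2:ℝ)^p * ((j:ℝ)+1:ℝ)^p * ((l:ℝ)^p * (x ^ l / (Nat.factorial l : ℝ))) := by ring
      · positivity
  set e : ℝ := Real.exp (-1 / (4 * σb ^ 2 * Δ)) with he
  have hepos : 0 < e := Real.exp_pos _
  -- the key termwise estimate
  have hkey : ∀ k : ℕ, 1 ≤ k → F (j + k) ≤ dj * (e * G k) := by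
    intro k hk
    have hjk : j < j + k := Nat.lt_add_of_pos_right hk
    have hk1 : (1:ℝ) ≤ (k:ℝ) := by exact_mod_cast hk
    simp only [hF, hG, if_pos hjk, if_pos hk]
    -- exponent inequality
    have hexp : E (j + k) ≤ E j * e := by
      simp only [hE, he]
      rw [← Real.exp_add]
      apply Real.exp_le_exp.mpr
      have hcast : (σ * b + (j : ℝ) - ((j:ℕ) + (k:ℕ) : ℕ) + δ * Δ) = c - k := by
        push_cast; simp only [hcdef]; ring
      have hcast2 : (σ * b + (j : ℝ) - (j : ℝ) + δ * Δ) = c := by simp only [hcdef]; ring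
      rw [hcast, hcast2]
      have habs : -(1/4 : ℝ) ≤ c := neg_le_of_abs_le hc
      have habs2 : c ≤ 1/4 := le_of_abs_le hc
      have heq : -c ^ 2 / (2 * σb ^ 2 * Δ) + -1 / (4 * σb ^ 2 * Δ)
          = (-c ^ 2 - 1/2) / (2 * σb ^ 2 * Δ) := by
        field_simp
        ring
      rw [heq, div_le_div_iff_of_pos_right hden]
      nlinarith
    -- factorial inequality
    have hfac : (Nat.factorial j : ℝ) * (Nat.factorial k : ℝ) ≤ (Nat.factorial (j + k) : ℝ) := by
      exact_mod_cast Nat.le_of_dvd (Nat.factorial_pos _)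
        (Nat.factorial_mul_factorial_dvd_factorial_add j k)
    have hxpow : x ^ (j + k) / (Nat.factorial (j + k) : ℝ)
        ≤ (x ^ j / (Nat.factorial j : ℝ)) * (x ^ k / (Nat.factorial k : ℝ)) := by
      rw [pow_add, div_mul_div_comm]
      apply div_le_div_of_nonneg_left (by positivity) (by positivity) hfac
      |>.trans_eq rfl
    have hmp : (((j + k : ℕ) : ℝ)) ^ p = ((k : ℝ) + (j : ℝ)) ^ p := by push_cast; ring
    calc (((j + k : ℕ) : ℝ)) ^ p * E (j + k) * (x ^ (j + k) / (Nat.factorial (j + k) : ℝ))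
        ≤ (((j + k : ℕ) : ℝ)) ^ p * (E j * e) *
            ((x ^ j / (Nat.factorial j : ℝ)) * (x ^ k / (Nat.factorial k : ℝ))) := by
          apply mul_le_mul (mul_le_mul_of_nonneg_left hexp (by positivity)) hxpow
            (by positivity)
          have := (hEpos j).le; positivity
      _ = dj * (e * (((k : ℝ) + (j : ℝ)) ^ p * (x ^ k / (Nat.factorial k : ℝ)))) := by
          rw [hmp, hdj]; ring
  -- reindex the numerator and RHS sums
  have hinj1 : Function.Injective (fun l : ℕ => j + 1 + l) := fun a b h => by simpa using h
  have hNre : (∑' m : ℕ, F m) = ∑' l : ℕ, F (j + 1 + l) := by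
    refine (hinj1.tsum_eq ?_).symm
    intro m hm
    simp only [Function.mem_support, hF] at hm
    have hmj : j < m := by by_contra h; simp [h] at hm
    exact ⟨m - (j+1), by simp; omega⟩
  have hinj2 : Function.Injective (fun l : ℕ => 1 + l) := fun a b h => by simpa using h
  have hSre : (∑' l : ℕ, G l) = ∑' l : ℕ, G (1 + l) := by
    refine (hinj2.tsum_eq ?_).symm
    intro m hm
    simp only [Function.mem_support, hG] at hm
    have hmj : 1 ≤ m := by by_contra h; simp [h] at hm
    exact ⟨m - 1, by simp; omega⟩
  -- main comparison
  have hmain : (∑' m : ℕ, F m) ≤ dj * (e * ∑' l : ℕ, G l) := by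
    rw [hNre, hSre, ← tsum_mul_left, ← tsum_mul_left]
    apply Summable.tsum_le_tsum
    · intro l
      have : j + 1 + l = j + (1 + l) := by omega
      rw [this]
      exact hkey (1 + l) (by omega)
    · exact (summable_nat_add_iff (j+1)).mpr hsumF |>.congr (fun l => by
        simp only [Nat.add_comm])
    · exact ((summable_nat_add_iff 1).mpr hsumG |>.congr (fun l => by
        simp only [Nat.add_comm])).mul_left e |>.mul_left dj
  -- conclude
  have hGnn : 0 ≤ ∑' l : ℕ, G l := tsum_nonneg (fun l => by
    simp only [hG]; split
    · positivity
    · exact le_rfl)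
  have hFnn : 0 ≤ ∑' m : ℕ, F m := tsum_nonneg hFnonneg
  have hstep1 : (∑' m : ℕ, F m) / (∑' i : ℕ, E i * (x ^ i / (Nat.factorial i : ℝ)))
      ≤ (∑' m : ℕ, F m) / dj :=
    div_le_div_of_nonneg_left hFnn hdjpos hDge
  have hstep2 : (∑' m : ℕ, F m) / dj ≤ e * ∑' l : ℕ, G l := by
    rw [div_le_iff₀ hdjpos]
    linarith [hmain]
  exact hstep1.trans hstep2
end
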